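/- Let w be a hyperbolic element of the affine Weyl group W^aff. If the translation vector v_w is parallel to the fundamental coweight β∨ and Min(w) is not contained in any wall, then w stabilizes some geodesic tube of direction β∨. -/

import Mathlib

open scoped RealInnerProductSpace

noncomputable section

/-- The ambient Euclidean space of rank `m`.  Via the fixed `W`-invariant inner product we
identify the space `V` containing the root system with its dual `V*`; the affine space `A`
underlying `V*` is then the Euclidean space itself. -/
abbrev E (m : ℕ) := EuclideanSpace ℝ (Fin m)

variable {m : ℕ}

/-- The coroot `α∨ = 2α/(α,α)` of a vector `α` (under the identification of `V` with `V*`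
given by the invariant inner product). -/
def coroot (α : E m) : E m := (2 / ⟪α, α⟫) • α

/-- The affine reflection `s_{α,k}(x) = x - (⟨α,x⟩ - k) α∨` as a function. -/
def affReflFun (α : E m) (k : ℤ) : E m → E m := fun x => x - (⟪α, x⟫ - (k : ℝ)) • coroot α

lemma affReflFun_involutive (α : E m) (k : ℤ) : Function.Involutive (affReflFun α k) := by
  intro x
  by_cases h : α = 0
  · simp [affReflFun, coroot, h]
  · have hαα : ⟪α, α⟫ ≠ (0:ℝ) := (inner_self_ne_zero (𝕜 := ℝ)).mpr h
    have h2 : ⟪α, coroot α⟫ = (2:ℝ) := by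
      unfold coroot
      rw [real_inner_smul_right, div_mul_cancel₀ _ hαα]
    have key : ∀ y : E m, ∀ s : ℝ, ⟪α, y - s • coroot α⟫ = ⟪α, y⟫ - 2 * s := by
      intro y s
      rw [inner_sub_right, real_inner_smul_right, h2]
      ring
    show affReflFun α k (x - (⟪α, x⟫ - (k:ℝ)) • coroot α) = x
    unfold affReflFun
    rw [key]
    rw [sub_sub, ← add_smul]
    rw [show (⟪α, x⟫ - (k:ℝ)) + (⟪α, x⟫ - 2 * (⟪α, x⟫ - (k:ℝ)) - (k:ℝ)) = 0 by ring]
    simp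

/-- The affine reflection `s_{α,k}` as a permutation of the affine space. -/
def affRefl (α : E m) (k : ℤ) : Equiv.Perm (E m) := (affReflFun_involutive α k).toPerm

/-- The affine Weyl group of a set of roots `Φ`: the group generated by all affine
reflections `s_{α,k}`, `α ∈ Φ`, `k ∈ ℤ`. -/
def Waff (Φ : Set (E m)) : Subgroup (Equiv.Perm (E m)) :=
  Subgroup.closure {w | ∃ α ∈ Φ, ∃ k : ℤ, w = affRefl α k}

/-- `Φ` is a reduced (crystallographic) root system spanning the ambient space. -/
structure IsRootSystem (Φ : Set (E m)) : Prop where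
  finite : Φ.Finite
  ne_zero : ∀ α ∈ Φ, α ≠ (0 : E m)
  span_eq_top : Submodule.span ℝ Φ = ⊤
  reflect_mem : ∀ α ∈ Φ, ∀ β ∈ Φ, β - ⟪α, β⟫ • coroot α ∈ Φ
  crystallographic : ∀ α ∈ Φ, ∀ β ∈ Φ, ∃ z : ℤ, ⟪α, coroot β⟫ = (z : ℝ)
  reduced : ∀ α ∈ Φ, ∀ t : ℝ, t • α ∈ Φ → t = 1 ∨ t = -1

/-- `B` is a system of simple roots of `Φ`. -/
structure IsSimpleSystem (Φ : Set (E m)) (B : Fin m → E m) : Prop where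
  mem : ∀ i, B i ∈ Φ
  indep : LinearIndependent ℝ B
  decomp : ∀ α ∈ Φ, (∃ c : Fin m → ℤ, α = ∑ j, (c j : ℝ) • B j ∧ ∀ j, 0 ≤ c j) ∨
                    (∃ c : Fin m → ℤ, α = ∑ j, (c j : ℝ) • B j ∧ ∀ j, c j ≤ 0)

/-- `ω` is the system of fundamental coweights relative to the simple roots `B`,
i.e. `⟨α_i, ω_j∨⟩ = δ_{ij}`. -/
def IsFundamentalCoweights (B ω : Fin m → E m) : Prop :=
  ∀ i j, ⟪B i, ω j⟫ = if i = j then (1 : ℝ) else 0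

/-- The wall `H_{α,k} = {x : ⟨α,x⟩ = k}`. -/
def wall (α : E m) (k : ℤ) : Set (E m) := {x | ⟪α, x⟫ = (k : ℝ)}

/-- The union of all walls of the root system `Φ`. -/
def allWalls (Φ : Set (E m)) : Set (E m) := ⋃ α ∈ Φ, ⋃ k : ℤ, wall α k

/-- An alcove: a connected component of the complement of the union of all walls. -/
def IsAlcove (Φ : Set (E m)) (C : Set (E m)) : Prop :=
  ∃ x ∈ (allWalls Φ)ᶜ, C = connectedComponentIn (allWalls Φ)ᶜ x

/-- The set `𝒲` of walls removed when forming geodesic tubes of direction `β∨`: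
all walls `H_{α,k}` with `⟨α, β∨⟩ = 0` (equivalently `α ∈ Φ_I`). -/
def tubeWalls (Φ : Set (E m)) (β : E m) : Set (E m) :=
  ⋃ α ∈ {α ∈ Φ | ⟪α, β⟫ = (0:ℝ)}, ⋃ k : ℤ, wall α k

/-- A geodesic tube of direction `β∨`: a connected component of `A ∖ ⋃𝒲`. -/
def IsGeodesicTube (Φ : Set (E m)) (β : E m) (T : Set (E m)) : Prop :=
  ∃ x ∈ (tubeWalls Φ β)ᶜ, T = connectedComponentIn (tubeWalls Φ β)ᶜ x

/-- `d_γ = inf_x d(x, γx)`. -/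
def minDisp (f : E m → E m) : ℝ := ⨅ x, dist x (f x)

/-- `Min(γ) = {x : d(x,γx) = d_γ}`. -/
def minSet (f : E m → E m) : Set (E m) := {x | dist x (f x) = minDisp f}

/-- A hyperbolic isometry: semisimple (`Min` nonempty) with `d_γ > 0`. -/
def IsHyperbolic (f : E m → E m) : Prop := (minSet f).Nonempty ∧ 0 < minDisp f

/-- `v` is the vector by which `γ` translates its min set. -/
def HasTransVec (f : E m → E m) (v : E m) : Prop := ∀ x ∈ minSet f, f x = x + v

/-- `x` is the barycenter of the polysimplex `s`: the average of the vertices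
(extreme points of the closure) of `s`. -/
def IsBarycenter (s : Set (E m)) (x : E m) : Prop :=
  ∃ F : Finset (E m), (F : Set (E m)) = Set.extremePoints ℝ (closure s) ∧ F.Nonempty ∧
    x = (F.card : ℝ)⁻¹ • ∑ y ∈ F, y

/-- The centerline `ℒ = x + ℝ β∨`. -/
def centerline (x β : E m) : Set (E m) := {p | ∃ t : ℝ, p = x + t • β}



/-! ### Auxiliary development -/

section Aux

lemma norm_affReflFun0 (α : E m) (hα : α ≠ 0) (x : E m) :
    ‖affReflFun α 0 x‖ = ‖x‖ := by
  have hαα : ⟪α, α⟫ ≠ (0:ℝ) := (inner_self_ne_zero (𝕜 := ℝ)).mpr hα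
  have key : ⟪affReflFun α 0 x, affReflFun α 0 x⟫ = ⟪x, x⟫ := by
    unfold affReflFun coroot
    simp only [Int.cast_zero, sub_zero]
    rw [real_inner_sub_sub_self]
    rw [real_inner_smul_right, real_inner_smul_left, real_inner_smul_right,
      real_inner_smul_left, real_inner_smul_right, real_inner_comm x α,
      real_inner_smul_right, div_mul_cancel₀ _ hαα]
    ring
  have h1 : ‖affReflFun α 0 x‖^2 = ‖x‖^2 := by
    rw [← real_inner_self_eq_norm_sq, ← real_inner_self_eq_norm_sq, key]
  have := congrArg Real.sqrt h1
  rwa [Real.sqrt_sq (norm_nonneg _), Real.sqrt_sq (norm_nonneg _)] at this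

/-- The linear reflection `s_α` as a linear equivalence. -/
def reflLE (α : E m) : E m ≃ₗ[ℝ] E m where
  toFun := affReflFun α 0
  invFun := affReflFun α 0
  left_inv := affReflFun_involutive α 0
  right_inv := affReflFun_involutive α 0
  map_add' x y := by
    simp only [affReflFun, inner_add_right, Int.cast_zero, sub_zero]
    module
  map_smul' r x := by
    simp only [affReflFun, real_inner_smul_right, Int.cast_zero, sub_zero, RingHom.id_apply]
    module

/-- The linear reflection `s_α` as a linear isometry equivalence. -/
def reflLIE (α : E m) (hα : α ≠ 0) : E m ≃ₗᵢ[ℝ] E m :=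
  ⟨reflLE α, norm_affReflFun0 α hα⟩

@[simp] lemma reflLIE_apply (α : E m) (hα : α ≠ 0) (x : E m) :
    reflLIE α hα x = x - ⟪α, x⟫ • coroot α := by
  show affReflFun α 0 x = _
  simp [affReflFun]

/-- The key invariant: an affine map `x ↦ M x + b` with `M` a linear isometry preserving
`Φ` and `b` having integral inner products with all roots. -/
def Nice (Φ : Set (E m)) (f : E m → E m) : Prop :=
  ∃ (M : E m ≃ₗᵢ[ℝ] E m) (b : E m), (∀ x, f x = M x + b) ∧ (∀ β ∈ Φ, M β ∈ Φ) ∧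
    (∀ β ∈ Φ, ∃ z : ℤ, ⟪β, b⟫ = (z : ℝ))

lemma symm_mem_of_nice {Φ : Set (E m)} (hfin : Φ.Finite) (M : E m ≃ₗᵢ[ℝ] E m)
    (hM : ∀ β ∈ Φ, M β ∈ Φ) : ∀ β ∈ Φ, M.symm β ∈ Φ := by
  intro β hβ
  classical
  have himg : hfin.toFinset.image (⇑M) = hfin.toFinset := by
    apply Finset.eq_of_subset_of_card_le
    · intro y hy
      rcases Finset.mem_image.mp hy with ⟨γ, hγ, rfl⟩
      exact hfin.mem_toFinset.mpr (hM γ (hfin.mem_toFinset.mp hγ))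
    · rw [Finset.card_image_of_injective _ M.injective]
  have : β ∈ hfin.toFinset.image (⇑M) := by
    rw [himg]; exact hfin.mem_toFinset.mpr hβ
  rcases Finset.mem_image.mp this with ⟨γ, hγ, hγβ⟩
  have : M.symm β = γ := by rw [← hγβ]; exact M.symm_apply_apply γ
  rw [this]; exact hfin.mem_toFinset.mp hγ

lemma nice_of_mem_Waff {Φ : Set (E m)} (hΦ : IsRootSystem Φ) {w : Equiv.Perm (E m)}
    (hw : w ∈ Waff Φ) : Nice Φ ⇑w := by
  refine Subgroup.closure_induction (p := fun (g : Equiv.Perm (E m)) _ => Nice Φ ⇑g) ?_ ?_ ?_ ?_ hw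
  · rintro g ⟨α, hα, k, rfl⟩
    have hα0 : α ≠ 0 := hΦ.ne_zero α hα
    refine ⟨reflLIE α hα0, (k : ℝ) • coroot α, ?_, ?_, ?_⟩
    · intro x
      show affReflFun α k x = _
      rw [reflLIE_apply]
      simp only [affReflFun]
      rw [sub_smul]
      abel
    · intro β hβ
      rw [reflLIE_apply]
      exact hΦ.reflect_mem α hα β hβ
    · intro β hβ
      obtain ⟨z, hz⟩ := hΦ.crystallographic β hβ α hα
      refine ⟨k * z, ?_⟩
      rw [real_inner_smul_right, hz]
      push_cast
      ring
  · exact ⟨LinearIsometryEquiv.refl ℝ (E m), 0, fun x => by simp, fun β hβ => hβ,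
      fun β hβ => ⟨0, by simp⟩⟩
  · rintro g₁ g₂ _ _ ⟨M₁, b₁, hf₁, hM₁, hb₁⟩ ⟨M₂, b₂, hf₂, hM₂, hb₂⟩
    refine ⟨M₂.trans M₁, M₁ b₂ + b₁, ?_, ?_, ?_⟩
    · intro x
      show g₁ (g₂ x) = _
      rw [hf₂, hf₁]
      simp only [LinearIsometryEquiv.coe_trans, Function.comp_apply, map_add]
      abel
    · intro β hβ
      exact hM₁ _ (hM₂ β hβ)
    · intro β hβ
      obtain ⟨z₁, hz₁⟩ := hb₁ β hβ
      obtain ⟨z₂, hz₂⟩ := hb₂ (M₁.symm β) (symm_mem_of_nice hΦ.finite M₁ hM₁ β hβ)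
      refine ⟨z₂ + z₁, ?_⟩
      have : ⟪β, M₁ b₂⟫ = ⟪M₁.symm β, b₂⟫ := by
        conv_lhs => rw [← M₁.apply_symm_apply β]
        exact M₁.inner_map_map _ _
      rw [inner_add_right, this, hz₁, hz₂]
      push_cast
      ring
  · rintro g _ ⟨M, b, hf, hM, hb⟩
    refine ⟨M.symm, -(M.symm b), ?_, ?_, ?_⟩
    · intro x
      have : g (M.symm x + -(M.symm b)) = x := by
        rw [hf, map_add, map_neg, M.apply_symm_apply, M.apply_symm_apply]
        abel
      calc g⁻¹ x = g⁻¹ (g (M.symm x + -(M.symm b))) := by rw [this]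
        _ = M.symm x + -(M.symm b) := g.symm_apply_apply _
    · exact symm_mem_of_nice hΦ.finite M hM
    · intro β hβ
      obtain ⟨z, hz⟩ := hb (M β) (hM β hβ)
      refine ⟨-z, ?_⟩
      have : ⟪β, M.symm b⟫ = ⟪M β, b⟫ := by
        conv_lhs => rw [← M.symm_apply_apply β]
        exact M.symm.inner_map_map _ _
      rw [inner_neg_right, this, hz]
      push_cast
      ring

lemma dist_nice {f : E m → E m} (M : E m ≃ₗᵢ[ℝ] E m) (b : E m) (hf : ∀ x, f x = M x + b)
    (x y : E m) : dist (f x) (f y) = dist x y := by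
  rw [hf, hf, dist_eq_norm, dist_eq_norm]
  have : M x + b - (M y + b) = M (x - y) := by rw [map_sub]; abel
  rw [this, M.norm_map]

lemma continuous_nice {f : E m → E m} (M : E m ≃ₗᵢ[ℝ] E m) (b : E m)
    (hf : ∀ x, f x = M x + b) : Continuous f := by
  have : f = fun x => M x + b := funext hf
  rw [this]
  exact M.continuous.add continuous_const

lemma minDisp_le (f : E m → E m) (x : E m) : minDisp f ≤ dist x (f x) :=
  ciInf_le ⟨0, by rintro r ⟨y, rfl⟩; exact dist_nonneg⟩ x

lemma minSet_convex {f : E m → E m} (M : E m ≃ₗᵢ[ℝ] E m) (bv : E m)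
    (hf : ∀ x, f x = M x + bv) : Convex ℝ (minSet f) := by
  intro x hx y hy a b ha hb hab
  have hx' : dist x (f x) = minDisp f := hx
  have hy' : dist y (f y) = minDisp f := hy
  have key : a • x + b • y - f (a • x + b • y) = a • (x - f x) + b • (y - f y) := by
    rw [hf, hf, hf, map_add, map_smul, map_smul]
    have hb' : b = 1 - a := by linarith
    subst hb'
    module
  have hle : dist (a • x + b • y) (f (a • x + b • y)) ≤ minDisp f := by
    rw [dist_eq_norm, key]
    calc ‖a • (x - f x) + b • (y - f y)‖ ≤ ‖a • (x - f x)‖ + ‖b • (y - f y)‖ :=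
          norm_add_le _ _
      _ = a * ‖x - f x‖ + b * ‖y - f y‖ := by
          rw [norm_smul, norm_smul, Real.norm_eq_abs, Real.norm_eq_abs,
            abs_of_nonneg ha, abs_of_nonneg hb]
      _ = a * minDisp f + b * minDisp f := by
          rw [← dist_eq_norm, ← dist_eq_norm, hx', hy']
      _ = minDisp f := by rw [← add_mul, hab, one_mul]
  exact le_antisymm hle (minDisp_le f _)

lemma minSet_closed {f : E m → E m} (M : E m ≃ₗᵢ[ℝ] E m) (bv : E m)
    (hf : ∀ x, f x = M x + bv) : IsClosed (minSet f) := by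
  have hcf : Continuous f := continuous_nice M bv hf
  exact isClosed_eq (continuous_id.dist hcf) continuous_const

lemma minSet_invariant {f : E m → E m} (M : E m ≃ₗᵢ[ℝ] E m) (bv : E m)
    (hf : ∀ x, f x = M x + bv) {x : E m} (hx : x ∈ minSet f) : f x ∈ minSet f := by
  show dist (f x) (f (f x)) = minDisp f
  rw [dist_nice M bv hf]
  exact hx

lemma transvec_fixed {f : E m → E m} (M : E m ≃ₗᵢ[ℝ] E m) (bv : E m)
    (hf : ∀ x, f x = M x + bv) (hne : (minSet f).Nonempty) {v : E m}
    (hv : HasTransVec f v) : M v = v := by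
  obtain ⟨x₀, hx₀⟩ := hne
  have h1 : f x₀ = x₀ + v := hv x₀ hx₀
  have hx₁ : f x₀ ∈ minSet f := minSet_invariant M bv hf hx₀
  have h2 : f (f x₀) = f x₀ + v := hv _ hx₁
  have e1 : M x₀ + bv = x₀ + v := by rw [← hf, h1]
  have e2 : M (x₀ + v) + bv = x₀ + v + v := by
    calc M (x₀ + v) + bv = f (x₀ + v) := (hf _).symm
      _ = f (f x₀) := by rw [h1]
      _ = f x₀ + v := h2
      _ = x₀ + v + v := by rw [h1]
  rw [map_add] at e2
  have h3 : M v = (x₀ + v + v) - (M x₀ + bv) := by rw [← e2]; abel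
  rw [h3, e1]
  abel

lemma tubeWalls_mapsTo {Φ : Set (E m)} (M : E m ≃ₗᵢ[ℝ] E m) (bv : E m)
    (hM : ∀ β ∈ Φ, M β ∈ Φ) (hint : ∀ β ∈ Φ, ∃ z : ℤ, ⟪β, bv⟫ = (z : ℝ))
    {β₀ : E m} (hMβ₀ : M β₀ = β₀) {p : E m} (hp : p ∈ tubeWalls Φ β₀) :
    M p + bv ∈ tubeWalls Φ β₀ := by
  simp only [tubeWalls, Set.mem_iUnion, wall, Set.mem_setOf_eq, Set.mem_sep_iff] at hp ⊢
  obtain ⟨α, ⟨hαΦ, hαβ⟩, k, hk⟩ := hp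
  obtain ⟨z, hz⟩ := hint (M α) (hM α hαΦ)
  refine ⟨M α, ⟨hM α hαΦ, ?_⟩, k + z, ?_⟩
  · rw [← hMβ₀, M.inner_map_map, hαβ]
  · rw [inner_add_right, M.inner_map_map, hk, hz]
    push_cast
    ring

lemma exists_minSet_off_tubeWalls {Φ : Set (E m)} (hΦ : IsRootSystem Φ) {f : E m → E m}
    (hconv : Convex ℝ (minSet f)) (hclosed : IsClosed (minSet f))
    (hne : (minSet f).Nonempty) (β₀ : E m)
    (hnwall : ∀ α ∈ Φ, ∀ k : ℤ, ¬ minSet f ⊆ wall α k) :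
    ∃ x ∈ minSet f, x ∉ tubeWalls Φ β₀ := by
  by_contra hcon
  push_neg at hcon
  haveI : Nonempty (minSet f) := hne.to_subtype
  haveI : CompleteSpace (minSet f) := hclosed.completeSpace_coe
  haveI : Finite {α : E m // α ∈ Φ ∧ ⟪α, β₀⟫ = (0:ℝ)} := by
    have hsub : {α : E m | α ∈ Φ ∧ ⟪α, β₀⟫ = (0:ℝ)} ⊆ Φ := fun a ha => ha.1
    exact (hΦ.finite.subset hsub).to_subtype
  have hBaire := nonempty_interior_of_iUnion_of_closed
    (X := minSet f) (ι := {α : E m // α ∈ Φ ∧ ⟪α, β₀⟫ = (0:ℝ)} × ℤ)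
    (f := fun p => Subtype.val ⁻¹' wall p.1.1 p.2)
    (fun p => by
      have hwcl : IsClosed (wall p.1.1 p.2) :=
        isClosed_eq (Continuous.inner continuous_const continuous_id) continuous_const
      exact hwcl.preimage continuous_subtype_val)
    (by
      ext z
      simp only [Set.mem_iUnion, Set.mem_univ, iff_true]
      have := hcon z.1 z.2
      simp only [tubeWalls, Set.mem_iUnion, Set.mem_sep_iff] at this
      obtain ⟨α, ⟨hαΦ, hαβ⟩, k, hk⟩ := this
      exact ⟨⟨⟨α, hαΦ, hαβ⟩, k⟩, hk⟩)
  obtain ⟨⟨⟨α, hαΦ, hαβ⟩, k⟩, z, hz⟩ := hBaire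
  obtain ⟨ε, hε, hball⟩ := Metric.mem_nhds_iff.mp (mem_interior_iff_mem_nhds.mp hz)
  have hzw' : z ∈ Subtype.val ⁻¹' wall α k :=
    interior_subset (s := Subtype.val ⁻¹' wall α k) hz
  have hzw : ⟪α, (z : E m)⟫ = (k : ℝ) := hzw'
  obtain ⟨y, hyS, hyw⟩ := Set.not_subset.mp (hnwall α hαΦ k)
  set n : ℝ := ‖y - (z : E m)‖ with hn
  have hn0 : (0:ℝ) ≤ n := norm_nonneg _
  set t : ℝ := min 1 (ε / (2 * (n + 1))) with ht
  have ht0 : 0 < t := lt_min one_pos (by positivity)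
  have ht1 : t ≤ 1 := min_le_left _ _
  have htε : t * n < ε := by
    have h1 : t ≤ ε / (2 * (n + 1)) := min_le_right _ _
    have h2 : t * n ≤ ε / (2 * (n + 1)) * n :=
      mul_le_mul_of_nonneg_right h1 hn0
    have h3 : ε / (2 * (n + 1)) * n < ε := by
      rw [div_mul_eq_mul_div, div_lt_iff₀ (by positivity)]
      nlinarith
    linarith
  set q : E m := (z : E m) + t • (y - (z : E m)) with hq
  have hqS : q ∈ minSet f := by
    have : q = (1 - t) • (z : E m) + t • y := by rw [hq]; module
    rw [this]
    exact hconv z.2 hyS (by linarith) (le_of_lt ht0) (by ring)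
  have hdist : dist q (z : E m) < ε := by
    rw [dist_eq_norm]
    have : q - (z : E m) = t • (y - (z : E m)) := by rw [hq]; abel
    rw [this, norm_smul, Real.norm_eq_abs, abs_of_pos ht0]
    exact htε
  have hqball : (⟨q, hqS⟩ : minSet f) ∈ Metric.ball z ε := by
    rw [Metric.mem_ball, Subtype.dist_eq]
    exact hdist
  have hqw : ⟪α, q⟫ = (k : ℝ) := hball hqball
  have : ⟪α, q⟫ = (k : ℝ) + t * (⟪α, y⟫ - (k : ℝ)) := by
    rw [hq, inner_add_right, real_inner_smul_right, inner_sub_right, hzw]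
  rw [this] at hqw
  have : ⟪α, y⟫ = (k : ℝ) := by
    have := mul_eq_zero.mp (by linarith : t * (⟪α, y⟫ - (k : ℝ)) = 0)
    rcases this with h | h
    · exact absurd h (ne_of_gt ht0)
    · linarith
  exact hyw this

end Aux

/-- A hyperbolic element `w ∈ W^aff` whose translation vector is parallel
to the fundamental coweight `β∨ = ω_i∨` and whose min set is not contained in any wall
stabilizes some geodesic tube of direction `β∨`. -/
theorem stabilizes_tube_criterion {m : ℕ} (Φ : Set (E m)) (hΦ : IsRootSystem Φ)
    (B ω : Fin m → E m) (hB : IsSimpleSystem Φ B) (hω : IsFundamentalCoweights B ω)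
    (i : Fin m)
    (w : Equiv.Perm (E m)) (hw : w ∈ Waff Φ) (hhyp : IsHyperbolic (w : E m → E m))
    (v : E m) (hv : HasTransVec (w : E m → E m) v)
    (hpar : ∃ c : ℝ, v = c • ω i)
    (hnwall : ∀ α ∈ Φ, ∀ k : ℤ, ¬ minSet (w : E m → E m) ⊆ wall α k) :
    ∃ T, IsGeodesicTube Φ (ω i) T ∧ (w : E m → E m) '' T = T := by
  obtain ⟨M, bv, hfM, hMΦ, hint⟩ := nice_of_mem_Waff hΦ hw
  obtain ⟨M', bv', hfM', hMΦ', hint'⟩ := nice_of_mem_Waff hΦ (inv_mem hw)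
  obtain ⟨c, hc⟩ := hpar
  obtain ⟨hne, hpos⟩ := hhyp
  obtain ⟨x₁, hx₁⟩ := hne
  have hvnorm : ‖v‖ = minDisp ⇑w := by
    have h1 : dist x₁ (w x₁) = minDisp ⇑w := hx₁
    rw [hv x₁ hx₁] at h1
    rw [← h1, dist_eq_norm, show x₁ - (x₁ + v) = -v by abel, norm_neg]
  have hv0 : v ≠ 0 := by
    intro h
    rw [h, norm_zero] at hvnorm
    linarith
  have hc0 : c ≠ 0 := by
    rintro rfl
    rw [zero_smul] at hc
    exact hv0 hc
  have hMv : M v = v := transvec_fixed M bv hfM ⟨x₁, hx₁⟩ hv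
  have hMω : M (ω i) = ω i := by
    apply smul_right_injective (E m) hc0
    show c • M (ω i) = c • ω i
    rw [← map_smul, ← hc, hMv, hc]
  have hdisteq : ∀ x : E m, dist x (⇑w⁻¹ x) = dist x (⇑w x) := by
    intro x
    calc dist x (⇑w⁻¹ x) = dist (w x) (w (w⁻¹ x)) := (dist_nice M bv hfM _ _).symm
      _ = dist (w x) x := by rw [show w (w⁻¹ x) = x from w.apply_symm_apply x]
      _ = dist x (w x) := dist_comm _ _
  have hmdeq : minDisp ⇑w⁻¹ = minDisp ⇑w := by
    unfold minDisp
    exact iInf_congr hdisteq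
  have hmseq : minSet ⇑w⁻¹ = minSet ⇑w := by
    ext x
    show dist x (⇑w⁻¹ x) = _ ↔ dist x (⇑w x) = _
    rw [hdisteq, hmdeq]
  have hvinv : HasTransVec ⇑w⁻¹ (-v) := by
    intro x hx
    rw [hmseq] at hx
    have hx' : ⇑w⁻¹ x ∈ minSet ⇑w := by
      show dist (⇑w⁻¹ x) (w (⇑w⁻¹ x)) = _
      rw [show w (w⁻¹ x) = x from w.apply_symm_apply x, dist_comm, hdisteq]
      exact hx
    have hxx := hv _ hx'
    rw [show w (w⁻¹ x) = x from w.apply_symm_apply x] at hxx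
    have h5 : ⇑w⁻¹ x = x - v := eq_sub_of_add_eq hxx.symm
    rw [h5, sub_eq_add_neg]
  have hM'v : M' (-v) = -v :=
    transvec_fixed M' bv' hfM' (by rw [hmseq]; exact ⟨x₁, hx₁⟩) hvinv
  have hM'ω : M' (ω i) = ω i := by
    apply smul_right_injective (E m) hc0
    show c • M' (ω i) = c • ω i
    have hMv' : M' v = v := by rwa [map_neg, neg_inj] at hM'v
    rw [← map_smul, ← hc, hMv', hc]
  set TW := tubeWalls Φ (ω i) with hTWdef
  have hwTW : ⇑w '' TW = TW := by
    apply Set.Subset.antisymm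
    · rintro p ⟨q, hq, rfl⟩
      rw [hfM q]
      exact tubeWalls_mapsTo M bv hMΦ hint hMω hq
    · intro p hp
      refine ⟨⇑w⁻¹ p, ?_, w.apply_symm_apply p⟩
      rw [hfM' p]
      exact tubeWalls_mapsTo M' bv' hMΦ' hint' hM'ω hp
  set U := TWᶜ with hUdef
  have hwU : ⇑w '' U = U := by
    rw [hUdef, Equiv.image_compl, hwTW]
  have hw'U : ⇑w⁻¹ '' U = U := by
    conv_lhs => rw [← hwU]
    rw [← Set.image_comp]
    have : ⇑w⁻¹ ∘ ⇑w = id := funext w.symm_apply_apply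
    rw [this, Set.image_id]
  obtain ⟨x, hxmin, hxU⟩ := exists_minSet_off_tubeWalls hΦ (minSet_convex M bv hfM)
    (minSet_closed M bv hfM) ⟨x₁, hx₁⟩ (ω i) hnwall
  have hxU' : x ∈ U := hxU
  have hseg : segment ℝ x (x + v) ⊆ U := by
    rintro p hp
    obtain ⟨a, b, ha, hb, hab, rfl⟩ := hp
    intro hpTW
    apply hxU
    simp only [hTWdef, tubeWalls, Set.mem_iUnion, Set.mem_sep_iff, wall,
      Set.mem_setOf_eq] at hpTW ⊢
    obtain ⟨α, ⟨hαΦ, hαω⟩, k, hk⟩ := hpTW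
    refine ⟨α, ⟨hαΦ, hαω⟩, k, ?_⟩
    rw [← hk, inner_add_right, real_inner_smul_right, real_inner_smul_right,
      inner_add_right, hc, real_inner_smul_right, hαω]
    have ha1 : a = 1 - b := by linarith
    subst ha1
    ring
  set T := connectedComponentIn U x with hTdef
  have hxT : x ∈ T := mem_connectedComponentIn hxU'
  have hsegT : segment ℝ x (x + v) ⊆ T :=
    (convex_segment x (x + v)).isPreconnected.subset_connectedComponentIn
      (left_mem_segment ℝ x (x + v)) hseg
  have hwxT : ⇑w x ∈ T := by
    rw [hv x hxmin]
    exact hsegT (right_mem_segment ℝ x (x + v))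
  have hcont : Continuous ⇑w := continuous_nice M bv hfM
  have hcont' : Continuous ⇑w⁻¹ := continuous_nice M' bv' hfM'
  have himg : ⇑w '' T = connectedComponentIn U (w x) := by
    apply Set.Subset.antisymm
    · apply IsPreconnected.subset_connectedComponentIn
      · exact isPreconnected_connectedComponentIn.image _ hcont.continuousOn
      · exact ⟨x, hxT, rfl⟩
      · rw [← hwU]
        exact Set.image_mono (connectedComponentIn_subset U x)
    · have h2 : ⇑w⁻¹ '' connectedComponentIn U (w x) ⊆ T := by
        apply IsPreconnected.subset_connectedComponentIn
        · exact isPreconnected_connectedComponentIn.image _ hcont'.continuousOn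
        · refine ⟨w x, mem_connectedComponentIn ?_, w.symm_apply_apply x⟩
          rw [← hwU]
          exact ⟨x, hxU', rfl⟩
        · calc ⇑w⁻¹ '' connectedComponentIn U (w x)
              ⊆ ⇑w⁻¹ '' U := Set.image_mono (connectedComponentIn_subset _ _)
            _ = U := hw'U
      intro p hp
      exact ⟨⇑w⁻¹ p, h2 ⟨p, hp, rfl⟩, w.apply_symm_apply p⟩
  have hTeq : connectedComponentIn U (w x) = T := (connectedComponentIn_eq hwxT).symm
  exact ⟨T, ⟨x, hxU', hTdef⟩, by rw [himg, hTeq]⟩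

end
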